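/- arXiv:1612.02273 — 3 statements merged into one kernel-verified Lean document; each statement's English description precedes it below -/
import Mathlib

section
/- The block matrix H = -(1/ε)·[[diag(u₀ ⊙ (K u₁)), diag(u₀) K diag(u₁)], [diag(u₁) Kᵀ diag(u₀), diag(u₁ ⊙ (Kᵀ u₀))]] is negative semidefinite whenever u₀, u₁ have positive entries, K has positive entries, and ε > 0. -/
/-- The Hessian of the dual barrier term, the block matrix
`H = -(1/ε)[[diag(u₀⊙(Ku₁)), diag(u₀)K diag(u₁)],[diag(u₁)Kᵀdiag(u₀), diag(u₁⊙(Kᵀu₀))]]`,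
is negative semidefinite (stated as: `-H` is positive semidefinite). -/
theorem dual_barrier_hessian_negSemidef (n₀ n₁ : ℕ) (ε : ℝ) (hε : 0 < ε)
    (K : Matrix (Fin n₀) (Fin n₁) ℝ) (hK : ∀ i j, 0 < K i j)
    (u₀ : Fin n₀ → ℝ) (u₁ : Fin n₁ → ℝ) (hu₀ : ∀ i, 0 < u₀ i) (hu₁ : ∀ j, 0 < u₁ j) :
    (-((-(1 / ε)) • Matrix.fromBlocks
      (Matrix.diagonal fun i => u₀ i * ∑ j, K i j * u₁ j)
      (Matrix.diagonal u₀ * K * Matrix.diagonal u₁)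
      (Matrix.diagonal u₁ * K.transpose * Matrix.diagonal u₀)
      (Matrix.diagonal fun j => u₁ j * ∑ i, K i j * u₀ i))).PosSemidef := by
  rw [neg_smul, neg_neg]
  set A := Matrix.diagonal fun i => u₀ i * ∑ j, K i j * u₁ j with hA
  set B := Matrix.diagonal u₀ * K * Matrix.diagonal u₁ with hB
  set C := Matrix.diagonal u₁ * K.transpose * Matrix.diagonal u₀ with hC
  set D := Matrix.diagonal (fun j => u₁ j * ∑ i, K i j * u₀ i) with hD
  have key : ∀ (a : Fin n₀ → ℝ) (b : Fin n₁ → ℝ),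
      dotProduct (Sum.elim a b) (Matrix.mulVec (Matrix.fromBlocks A B C D) (Sum.elim a b))
        = ∑ i, ∑ j, u₀ i * K i j * u₁ j * (a i + b j)^2 := by
    intro a b
    rw [Matrix.fromBlocks_mulVec, sumElim_dotProduct_sumElim]
    simp only [hA, hB, hC, hD, Matrix.mulVec, dotProduct, Matrix.diagonal_mul,
      Matrix.mul_diagonal, Matrix.diagonal_apply, Matrix.transpose_apply, Pi.add_apply,
      Function.comp_apply, Sum.elim_inl, Sum.elim_inr, ite_mul, zero_mul,
      Finset.sum_ite_eq, Finset.sum_ite_eq', Finset.mem_univ, if_true]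
    simp only [Finset.mul_sum, Finset.sum_mul, mul_add, add_mul, Finset.sum_add_distrib]
    rw [Finset.sum_comm (f := fun x i => b x * (u₁ x * K i x * u₀ i * a i)),
      Finset.sum_comm (f := fun x i => b x * (u₁ x * (K i x * u₀ i) * b x)),
      ← Finset.sum_add_distrib, ← Finset.sum_add_distrib, ← Finset.sum_add_distrib]
    apply Finset.sum_congr rfl; intro i _
    rw [← Finset.sum_add_distrib, ← Finset.sum_add_distrib, ← Finset.sum_add_distrib]
    apply Finset.sum_congr rfl; intro j _
    ring
  have hBC : B.conjTranspose = C := by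
    rw [hB, hC, Matrix.conjTranspose_eq_transpose_of_trivial, Matrix.transpose_mul,
      Matrix.transpose_mul, Matrix.diagonal_transpose, Matrix.diagonal_transpose,
      Matrix.mul_assoc]
  have hherm : (Matrix.fromBlocks A B C D).IsHermitian := by
    rw [Matrix.isHermitian_fromBlocks_iff]
    exact ⟨Matrix.isHermitian_diagonal _, hBC,
      by rw [← hBC, Matrix.conjTranspose_conjTranspose], Matrix.isHermitian_diagonal _⟩
  refine Matrix.PosSemidef.of_dotProduct_mulVec_nonneg ?_ ?_
  · show _ = _
    rw [Matrix.conjTranspose_smul, hherm.eq, star_trivial]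
  · intro x
    rw [Matrix.smul_mulVec, dotProduct_smul]
    have hx : Sum.elim (x ∘ Sum.inl) (x ∘ Sum.inr) = x := Sum.elim_comp_inl_inr x
    rw [show (star x) = x from rfl, ← hx, key, smul_eq_mul]
    have h : 0 ≤ ∑ i, ∑ j, u₀ i * K i j * u₁ j * ((x ∘ Sum.inl) i + (x ∘ Sum.inr) j)^2 := by
      apply Finset.sum_nonneg; intro i _; apply Finset.sum_nonneg; intro j _
      exact mul_nonneg (mul_nonneg (mul_nonneg (hu₀ i).le (hK i j).le) (hu₁ j).le) (sq_nonneg _)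
    have hε' : (0:ℝ) ≤ 1/ε := by positivity
    exact mul_nonneg hε' h
end

section
/- Weak duality holds between the entropy-regularized transport problem and its dual: for any M with positive entries satisfying μ₀ = M1 and μ₁ = Mᵀ1, and any λ₀ ∈ ℝ^{n₀}, λ₁ ∈ ℝ^{n₁}, one has trace(CᵀM) + εD(M) ≥ λ₀ᵀμ₀ + λ₁ᵀμ₁ - ε exp(λ₀/ε)ᵀ exp(-C/ε) exp(λ₁/ε) + ε n₀ n₁. -/
/-- Weak duality for the entropy-regularized transport problem: any feasible positive `M`
has primal value at least the dual objective value, for any `λ₀, λ₁`. -/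
theorem entropic_weak_duality (n₀ n₁ : ℕ) (ε : ℝ) (hε : 0 < ε)
    (C : Matrix (Fin n₀) (Fin n₁) ℝ) (μ₀ : Fin n₀ → ℝ) (μ₁ : Fin n₁ → ℝ)
    (M : Matrix (Fin n₀) (Fin n₁) ℝ) (hMpos : ∀ i j, 0 < M i j)
    (hrow : ∀ i, ∑ j, M i j = μ₀ i) (hcol : ∀ j, ∑ i, M i j = μ₁ j) :
    ∀ (lam₀ : Fin n₀ → ℝ) (lam₁ : Fin n₁ → ℝ),
      ∑ i, lam₀ i * μ₀ i + ∑ j, lam₁ j * μ₁ j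
        - ε * ∑ i, ∑ j, Real.exp (lam₀ i / ε) * Real.exp (-C i j / ε) * Real.exp (lam₁ j / ε)
        + ε * n₀ * n₁
      ≤ ∑ i, ∑ j, C i j * M i j
        + ε * ∑ i, ∑ j, (M i j * Real.log (M i j) - M i j + 1) := by
  intro lam₀ lam₁
  have key : ∀ i j,
      lam₀ i * M i j + lam₁ j * M i j
        - ε * (Real.exp (lam₀ i / ε) * Real.exp (-C i j / ε) * Real.exp (lam₁ j / ε)) + ε
      ≤ C i j * M i j + ε * (M i j * Real.log (M i j) - M i j + 1) := by
    intro i j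
    have ha := hMpos i j
    set a := M i j with hadef
    set t := (lam₀ i + lam₁ j - C i j) / ε with htdef
    have h1 : Real.exp (lam₀ i / ε) * Real.exp (-C i j / ε) * Real.exp (lam₁ j / ε)
        = Real.exp t := by
      rw [← Real.exp_add, ← Real.exp_add, htdef]
      congr 1
      field_simp
      ring
    have h2 : (t - Real.log a) + 1 ≤ Real.exp (t - Real.log a) := Real.add_one_le_exp _
    have h3 : Real.exp (t - Real.log a) = Real.exp t / a := by
      rw [Real.exp_sub, Real.exp_log ha]
    have h4 : a * ((t - Real.log a) + 1) ≤ Real.exp t := by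
      rw [h3] at h2
      calc a * ((t - Real.log a) + 1) ≤ a * (Real.exp t / a) :=
            mul_le_mul_of_nonneg_left h2 ha.le
        _ = Real.exp t := by field_simp
    have ht : ε * t = lam₀ i + lam₁ j - C i j := by
      rw [htdef]; field_simp
    rw [h1]
    nlinarith [mul_le_mul_of_nonneg_left h4 hε.le, mul_pos hε ha]
  have hL : ∑ i, lam₀ i * μ₀ i = ∑ i, ∑ j, lam₀ i * M i j := by
    simp_rw [← hrow, Finset.mul_sum]
  have hR : ∑ j, lam₁ j * μ₁ j = ∑ i, ∑ j, lam₁ j * M i j := by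
    rw [Finset.sum_comm]
    simp_rw [← hcol, Finset.mul_sum]
  have hmain := Finset.sum_le_sum (fun i (_ : i ∈ Finset.univ) =>
    Finset.sum_le_sum (fun j (_ : j ∈ Finset.univ) => key i j))
  rw [hL, hR]
  simp only [Finset.sum_add_distrib, Finset.sum_sub_distrib, Finset.mul_sum, mul_sub, mul_add,
    mul_one, Finset.sum_const, Finset.card_univ, Fintype.card_fin, nsmul_eq_mul] at hmain ⊢
  linarith
end

section
/- For g(x) = (1/(2σ))‖x - μ₁‖₂² and ε > 0, the entropic proximal Prox^{KL}_{ε⁻¹g}(z) := argmin_x ε⁻¹ g(x) + D(x|z), where D(x|z) = Σ_i (x_i log(x_i/z_i) - x_i + z_i), evaluated at a positive vector z, is given entrywise by σε·ω(μ₁(i)/(σε) + log(z_i/(σε))), where ω is the Wright omega function. -/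
/-- Per-coordinate inequality: if `s` satisfies the first-order condition of
`t ↦ a(t-μ)² + t log(t/zz) - t + zz`, then `s` is a minimizer with quadratic gap. -/
lemma coord_ineq (a zz s t μ : ℝ) (ha : 0 < a) (hzz : 0 < zz) (hs : 0 < s) (ht : 0 < t)
    (hcrit : 2 * a * (s - μ) + (Real.log s - Real.log zz) = 0) :
    a * (s - μ) ^ 2 + (s * Real.log (s / zz) - s + zz) + a * (t - s) ^ 2
      ≤ a * (t - μ) ^ 2 + (t * Real.log (t / zz) - t + zz) := by
  have hlog := Real.log_le_sub_one_of_pos (show (0:ℝ) < s / t by positivity)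
  rw [Real.log_div hs.ne' ht.ne'] at hlog
  rw [Real.log_div hs.ne' hzz.ne', Real.log_div ht.ne' hzz.ne']
  have hkey : t - s ≤ t * (Real.log t - Real.log s) := by
    have h := mul_le_mul_of_nonneg_left hlog ht.le
    have h2 : t * (s / t) = s := by field_simp
    nlinarith [h, h2]
  have expand : a * (t - μ) ^ 2 + (t * (Real.log t - Real.log zz) - t + zz)
      - (a * (s - μ) ^ 2 + (s * (Real.log s - Real.log zz) - s + zz) + a * (t - s) ^ 2)
      = t * (Real.log t - Real.log s) - (t - s) := by
    linear_combination (t - s) * hcrit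
  linarith

/-- The entropic proximal of `g(x) = (1/(2σ))‖x-μ₁‖₂²` at a positive vector `z` is given
entrywise by `σε·ω(μ₁(i)/(σε) + log(z_i/(σε)))`, where `ω` is the Wright omega function. -/
theorem entropic_prox_quadratic (n : ℕ) (σ ε : ℝ) (hσ : 0 < σ) (hε : 0 < ε)
    (μ₁ z : Fin n → ℝ) (hz : ∀ i, 0 < z i)
    (ω : ℝ → ℝ) (hω : ∀ x, 0 < ω x ∧ x = Real.log (ω x) + ω x)
    (F : (Fin n → ℝ) → ℝ)
    (hF : ∀ x, F x = ε⁻¹ * ((1 / (2 * σ)) * ∑ i, (x i - μ₁ i) ^ 2)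
        + ∑ i, (x i * Real.log (x i / z i) - x i + z i))
    (xstar : Fin n → ℝ)
    (hxstar : ∀ i, xstar i = σ * ε * ω (μ₁ i / (σ * ε) + Real.log (z i / (σ * ε)))) :
    (∀ i, 0 < xstar i) ∧
    (∀ x : Fin n → ℝ, (∀ i, 0 < x i) → x ≠ xstar → F xstar < F x) := by
  set a : ℝ := ε⁻¹ * (1 / (2 * σ)) with ha_def
  have ha : 0 < a := by positivity
  have hσε : (0:ℝ) < σ * ε := by positivity
  have hpos : ∀ i, 0 < xstar i := by
    intro i
    rw [hxstar i]
    exact mul_pos hσε (hω _).1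
  refine ⟨hpos, ?_⟩
  have hFsum : ∀ y : Fin n → ℝ,
      F y = ∑ i, (a * (y i - μ₁ i) ^ 2 + (y i * Real.log (y i / z i) - y i + z i)) := by
    intro y
    rw [hF, Finset.mul_sum, Finset.mul_sum, ← Finset.sum_add_distrib]
    exact Finset.sum_congr rfl fun i _ => by ring
  have hcrit : ∀ i, 2 * a * (xstar i - μ₁ i)
      + (Real.log (xstar i) - Real.log (z i)) = 0 := by
    intro i
    set c : ℝ := μ₁ i / (σ * ε) + Real.log (z i / (σ * ε)) with hc_def
    have h1 : c = Real.log (ω c) + ω c := (hω c).2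
    have hωpos : 0 < ω c := (hω c).1
    have hsx : xstar i = σ * ε * ω c := hxstar i
    have hlogs : Real.log (xstar i) = Real.log (σ * ε) + Real.log (ω c) := by
      rw [hsx, Real.log_mul hσε.ne' hωpos.ne']
    have hlogz : Real.log (z i / (σ * ε)) = Real.log (z i) - Real.log (σ * ε) :=
      Real.log_div (hz i).ne' hσε.ne'
    rw [hlogz] at hc_def
    rw [hlogs, hsx, ha_def]
    have hσε' : (σ * ε) ≠ 0 := hσε.ne'
    field_simp at hc_def ⊢
    nlinarith [h1, hc_def, hσε]
  intro x hx hne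
  obtain ⟨j, hj⟩ : ∃ j, x j ≠ xstar j := Function.ne_iff.mp hne
  have hle : ∀ i ∈ Finset.univ (α := Fin n),
      a * (xstar i - μ₁ i) ^ 2 + (xstar i * Real.log (xstar i / z i) - xstar i + z i)
        + a * (x i - xstar i) ^ 2
      ≤ a * (x i - μ₁ i) ^ 2 + (x i * Real.log (x i / z i) - x i + z i) := by
    intro i _
    exact coord_ineq a (z i) (xstar i) (x i) (μ₁ i) ha (hz i) (hpos i) (hx i) (hcrit i)
  have hsum := Finset.sum_le_sum hle
  rw [Finset.sum_add_distrib] at hsum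
  have hq : 0 < ∑ i, a * (x i - xstar i) ^ 2 := by
    apply Finset.sum_pos' (fun i _ => by positivity)
    refine ⟨j, Finset.mem_univ j, mul_pos ha ?_⟩
    exact lt_of_le_of_ne (sq_nonneg _) (Ne.symm (pow_ne_zero 2 (sub_ne_zero.mpr hj)))
  rw [hFsum x, hFsum xstar]
  linarith
end
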